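/- Let D be a finite abelian group and b : D × D → ℚ/ℤ a symmetric bilinear map which is nondegenerate, i.e., if b(x, y) = 0 for all y ∈ D then x = 0. For an integer c set D_c = {x ∈ D : cx = 0} and D^c = cD = {cx : x ∈ D}. Then D^c is exactly the orthogonal complement of D_c, i.e., D^c = {y ∈ D : b(x, y) = 0 for all x ∈ D_c}. -/

import Mathlib

/-!
Statement 8: Let `D` be a finite abelian group and `b : D × D → ℚ/ℤ` a nondegenerate
symmetric bilinear map.  For an integer `c`, `D^c = cD` is exactly the orthogonal
complement of `D_c = {x : cx = 0}`.
-/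

namespace RMV

/-- The group `ℚ/ℤ`. -/
abbrev QmodZ : Type := ℚ ⧸ AddSubgroup.zmultiples (1 : ℚ)

section Aux

local notation "Q" => AddCircle (1 : ℚ)

lemma zmod_hom_ext {n : ℕ} [NeZero n] {A : Type*} [AddCommGroup A]
    {f g : ZMod n →+ A} (h : f 1 = g 1) : f = g := by
  ext x
  have hx : x = x.val • (1 : ZMod n) := by
    rw [nsmul_eq_mul, mul_one, ZMod.natCast_zmod_val]
  rw [hx, map_nsmul, map_nsmul, h]

/-- The hom `ZMod m →+ ℚ/ℤ` sending `k` to `k/m`. -/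
noncomputable def psi (m : ℕ) : ZMod m →+ Q :=
  ZMod.lift m ⟨(LinearMap.toSpanSingleton ℤ Q ((((m : ℚ)⁻¹ : ℚ) : Q))).toAddMonoidHom, by
    simp only [LinearMap.toAddMonoidHom_coe, LinearMap.toSpanSingleton_apply]
    rcases Nat.eq_zero_or_pos m with h | h
    · subst h; simp
    · have hm : (m : ℚ) ≠ 0 := by positivity
      refine (AddCircle.coe_eq_zero_iff _).mpr ⟨1, ?_⟩
      show (1 : ℤ) • (1 : ℚ) = (m : ℤ) • (m : ℚ)⁻¹
      simp [zsmul_eq_mul, mul_inv_cancel₀ hm]⟩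

lemma psi_intCast (m : ℕ) (k : ℤ) : psi m (k : ZMod m) = (((k : ℚ) * (m : ℚ)⁻¹ : ℚ) : Q) := by
  rw [psi, ZMod.lift_coe]
  show (k : ℤ) • ((((m : ℚ)⁻¹ : ℚ) : Q)) = _
  rw [← QuotientAddGroup.mk_zsmul]
  norm_num [zsmul_eq_mul]

lemma psi_injective (m : ℕ) [NeZero m] : Function.Injective (psi m) := by
  have hm : (0 : ℚ) < m := by exact_mod_cast Nat.pos_of_ne_zero (NeZero.ne m)
  rw [injective_iff_map_eq_zero]
  intro a ha
  have h1 : a = ((a.val : ℤ) : ZMod m) := by push_cast [ZMod.natCast_zmod_val]; rfl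
  rw [h1, psi_intCast, AddCircle.coe_eq_zero_iff] at ha
  obtain ⟨n, hn⟩ := ha
  simp only [zsmul_eq_mul, mul_one] at hn
  have hval : (a.val : ℚ) < m := by exact_mod_cast ZMod.val_lt a
  have hval0 : (0 : ℚ) ≤ (a.val : ℚ) := by positivity
  have hn' : (n : ℚ) * m = a.val := by
    field_simp at hn
    push_cast at hn
    linarith [hn]
  have h3 : (0 : ℚ) ≤ (n : ℚ) := by nlinarith
  have h2 : (n : ℚ) < 1 := by nlinarith
  have hn0 : n = 0 := by
    have h2' : n < 1 := by exact_mod_cast h2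
    have h3' : 0 ≤ n := by exact_mod_cast h3
    omega
  subst hn0
  have hv : (a.val : ℚ) = 0 := by push_cast at hn'; linarith [hn']
  have : a.val = 0 := by exact_mod_cast hv
  exact (ZMod.val_eq_zero a).mp this

lemma psi_torsion_surj (m : ℕ) [NeZero m] (q : Q) (hq : (m : ℤ) • q = 0) :
    ∃ a : ZMod m, psi m a = q := by
  have hm : (m : ℚ) ≠ 0 := by
    exact_mod_cast Nat.pos_of_ne_zero (NeZero.ne m) |>.ne'
  obtain ⟨r, rfl⟩ := QuotientAddGroup.mk_surjective q
  rw [← QuotientAddGroup.mk_zsmul] at hq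
  rw [show ((QuotientAddGroup.mk ((m : ℤ) • r) : Q)) = (((m : ℤ) • r : ℚ) : Q) from rfl,
    AddCircle.coe_eq_zero_iff] at hq
  obtain ⟨k, hk⟩ := hq
  refine ⟨((k : ℤ) : ZMod m), ?_⟩
  rw [psi_intCast]
  congr 1
  simp only [zsmul_eq_mul, smul_eq_mul, mul_one] at hk ⊢
  field_simp
  linear_combination hk

/-- For `m ≠ 0`, `ZMod m` is equivalent to its `ℚ/ℤ`-dual. -/
noncomputable def zmodHomEquiv (m : ℕ) [NeZero m] : ZMod m ≃ (ZMod m →+ Q) := by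
  refine Equiv.ofBijective (fun a => (psi m).comp (AddMonoidHom.mulRight a)) ⟨?_, ?_⟩
  · intro a a' h
    have := DFunLike.congr_fun h (1 : ZMod m)
    simp only [AddMonoidHom.comp_apply, AddMonoidHom.coe_mulRight, one_mul] at this
    exact psi_injective m this
  · intro f
    have h1 : (m : ℤ) • f 1 = 0 := by
      rw [← map_zsmul]
      have h2 : ((m : ℤ) • (1 : ZMod m)) = 0 := by simp [zsmul_eq_mul]
      rw [h2, map_zero]
    obtain ⟨a, ha⟩ := psi_torsion_surj m (f 1) h1
    refine ⟨a, zmod_hom_ext ?_⟩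
    simpa using ha

/-- Any finite abelian group is (non-canonically) in bijection with its `ℚ/ℤ`-dual. -/
lemma homEquivSelf (D : Type) [AddCommGroup D] [Finite D] :
    Nonempty (D ≃ (D →+ Q)) := by
  classical
  obtain ⟨ι, hι, n, hlt, ⟨e⟩⟩ := AddCommGroup.equiv_directSum_zmod_of_finite' D
  have : ∀ i, NeZero (n i) := fun i => ⟨by have := hlt i; omega⟩
  have e1 : (D →+ Q) ≃ ((DirectSum ι (fun i => ZMod (n i))) →+ Q) :=
    { toFun := fun f => f.comp e.symm.toAddMonoidHom
      invFun := fun g => g.comp e.toAddMonoidHom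
      left_inv := fun f => by ext x; simp
      right_inv := fun g => by ext x; simp }
  have e2 : ((DirectSum ι (fun i => ZMod (n i))) →+ Q) ≃ (∀ i, ZMod (n i) →+ Q) :=
    { toFun := fun g i => g.comp (DirectSum.of (fun i => ZMod (n i)) i)
      invFun := fun h => DirectSum.toAddMonoid h
      left_inv := fun g => by
        refine DirectSum.addHom_ext fun i x => ?_
        simp [DirectSum.toAddMonoid_of]
      right_inv := fun h => by
        funext i; ext x
        simp [DirectSum.toAddMonoid_of] }
  have e4 : DirectSum ι (fun i => ZMod (n i)) ≃ (∀ i, ZMod (n i)) :=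
    DFinsupp.equivFunOnFintype
  exact ⟨e.toEquiv.trans (e4.trans ((Equiv.piCongrRight fun i => zmodHomEquiv (n i)).trans
      (e2.symm.trans e1.symm)))⟩

end Aux

theorem image_eq_orthogonal_complement_of_torsion
    (D : Type) [AddCommGroup D] [Finite D]
    (b : D → D → QmodZ)
    (haddl : ∀ x y z : D, b (x + y) z = b x z + b y z)
    (haddr : ∀ x y z : D, b x (y + z) = b x y + b x z)
    (hsymm : ∀ x y : D, b x y = b y x)
    (hnondeg : ∀ x : D, (∀ y : D, b x y = 0) → x = 0)
    (c : ℤ) :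
    ∀ y : D, (∃ x : D, y = c • x) ↔ (∀ x : D, c • x = 0 → b x y = 0) := by
  -- the adjoint map
  set β : D →+ (D →+ QmodZ) :=
    AddMonoidHom.mk' (fun y => AddMonoidHom.mk' (fun x => b x y) (fun u v => haddl u v y))
      (by intro y z; ext x; exact haddr x y z) with hβ
  have hβapp : ∀ x y : D, β y x = b x y := fun x y => rfl
  have hzsmul_r : ∀ (k : ℤ) (x y : D), b x (k • y) = k • b x y := by
    intro k x y
    exact map_zsmul (AddMonoidHom.mk' (fun z => b x z) (fun u v => haddr x u v)) k y
  have hzsmul_l : ∀ (k : ℤ) (x y : D), b (k • x) y = k • b x y := by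
    intro k x y
    exact map_zsmul (AddMonoidHom.mk' (fun z => b z y) (fun u v => haddl u v y)) k x
  have hβinj : Function.Injective β := by
    rw [injective_iff_map_eq_zero]
    intro y hy
    refine hnondeg y fun x => ?_
    rw [hsymm]
    have := DFunLike.congr_fun hy x
    simpa [hβapp] using this
  have hβsurj : Function.Surjective β :=
    (Finite.injective_iff_surjective_of_equiv (homEquivSelf D).some).mp hβinj
  intro y
  constructor
  · rintro ⟨x, rfl⟩ z hz
    calc b z (c • x) = c • b z x := hzsmul_r c z x
      _ = b (c • z) x := (hzsmul_l c z x).symm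
      _ = b 0 x := by rw [hz]
      _ = 0 := by
        have := map_zero (AddMonoidHom.mk' (fun w => b w x) (fun u v => haddl u v x))
        simpa using this
  · intro hy
    by_contra hne
    push_neg at hne
    -- y is not in the image subgroup H = cD
    set f : D →+ D := AddMonoidHom.mk' (fun x => c • x) (fun u v => smul_add c u v) with hf
    set H : AddSubgroup D := f.range with hH
    have hyH : y ∉ H := by
      rintro ⟨x, rfl⟩
      exact hne x rfl
    have hy0 : (QuotientAddGroup.mk y : D ⧸ H) ≠ 0 := by
      simpa [QuotientAddGroup.eq_zero_iff] using hyH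
    obtain ⟨χ, hχ⟩ := CharacterModule.exists_character_apply_ne_zero_of_ne_zero hy0
    set ψ : D →+ QmodZ := χ.comp (QuotientAddGroup.mk' H) with hψ
    have hψy : ψ y ≠ 0 := hχ
    have hψc : ∀ x : D, ψ (c • x) = 0 := by
      intro x
      have h0 : (QuotientAddGroup.mk (c • x) : D ⧸ H) = 0 := by
        rw [QuotientAddGroup.eq_zero_iff]
        exact ⟨x, rfl⟩
      simp only [hψ, AddMonoidHom.comp_apply, QuotientAddGroup.mk'_apply]
      exact (congrArg χ h0).trans (map_zero χ)
    obtain ⟨z, hz⟩ := hβsurj ψ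
    have hbz : ∀ x : D, b x z = ψ x := fun x => by
      rw [← hβapp x z, hz]
    have hcz : c • z = 0 := by
      refine hnondeg (c • z) fun x => ?_
      calc b (c • z) x = b x (c • z) := hsymm _ _
        _ = c • b x z := hzsmul_r c x z
        _ = b (c • x) z := (hzsmul_l c x z).symm
        _ = ψ (c • x) := hbz _
        _ = 0 := hψc x
    have hzy : b z y = 0 := hy z hcz
    have : ψ y = 0 := by rw [← hbz y, hsymm]; exact hzy
    exact hψy this

end RMV
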